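/- Let 𝒢 be a hereditary class of graphs and c, d > 0 real constants such that every graph in 𝒢 that has a Hamiltonian path and order n has an induced path of order at least c·(log₂ n)^d. Let ε ∈ (0,1) and let 𝒢_ε be the class of graphs G for which there exists a set X ⊆ V(G) with |X| ≤ |G|^ε such that G − X ∈ 𝒢. Then there is a constant c′ > 0, depending only on c, d and ε, such that every graph G ∈ 𝒢_ε that has a Hamiltonian path and order n has an induced path of order at least c′·(log₂ n)^d. -/

import Mathlib

open SimpleGraph Real

/-- `G` has a (not necessarily induced) path on `n` vertices. -/
def HasPathOfOrder {V : Type*} (G : SimpleGraph V) (n : ℕ) : Prop :=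
  ∃ (u v : V) (p : G.Walk u v), p.IsPath ∧ p.length + 1 = n

/-- `G` has a Hamiltonian path. -/
def HasHamPath {V : Type*} (G : SimpleGraph V) : Prop :=
  ∃ (u v : V) (p : G.Walk u v), p.IsPath ∧ ∀ w, w ∈ p.support

/-- `G` has an induced path on at least `r` vertices (an induced subgraph isomorphic to a
path graph on `m ≥ r` vertices). -/
def HasInducedPathGE {V : Type*} (G : SimpleGraph V) (r : ℝ) : Prop :=
  ∃ m : ℕ, r ≤ (m : ℝ) ∧ Nonempty (pathGraph m ↪g G)

/-- A tree (or path) representation of `G` over the graph `T`: every vertex `v` of `G` has a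
nonempty connected model `model v ⊆ V(T)`, and models of adjacent vertices intersect. -/
structure TreeRep {V N : Type*} (G : SimpleGraph V) (T : SimpleGraph N) where
  model : V → Set N
  model_connected : ∀ v, (T.induce (model v)).Connected
  adj_meet : ∀ ⦃u v⦄, G.Adj u v → (model u ∩ model v).Nonempty

namespace TreeRep

variable {V N : Type*} {G : SimpleGraph V} {T : SimpleGraph N}

/-- The bag of the representation at a node `t`. -/
def bag (R : TreeRep G T) (t : N) : Set V := {v | t ∈ R.model v}

/-- The representation has width less than `k`, i.e. all bags have at most `k` vertices. -/
def WidthLT (R : TreeRep G T) (k : ℕ) : Prop := ∀ t, (R.bag t).ncard ≤ k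

/-- The representation has width at most `k`, i.e. all bags have at most `k + 1` vertices. -/
def WidthLE (R : TreeRep G T) (k : ℕ) : Prop := ∀ t, (R.bag t).ncard ≤ k + 1

/-- The weight of a path `p` of `T`: the number of vertices of `G` whose model meets `p`. -/
noncomputable def pathWeight (R : TreeRep G T) {x y : N} (p : T.Walk x y) : ℕ :=
  {v : V | ∃ t ∈ p.support, t ∈ R.model v}.ncard

/-- A representation is varied if no bag is contained in the bag at a neighboring node. -/
def Varied (R : TreeRep G T) : Prop := ∀ ⦃t t'⦄, T.Adj t t' → ¬ R.bag t ⊆ R.bag t'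

/-- The representation has adhesion less than `a`: the adhesion set of every edge of `T`
has fewer than `a` vertices. -/
def AdhesionLT (R : TreeRep G T) (a : ℕ) : Prop :=
  ∀ ⦃t t'⦄, T.Adj t t' → (R.bag t ∩ R.bag t').ncard < a

/-- The torso of the representation at a node `t`: the subgraph induced on the bag at `t`
together with all edges inside adhesion sets of edges of `T` incident to `t`. -/
def torso (R : TreeRep G T) (t : N) : SimpleGraph (R.bag t) :=
  SimpleGraph.fromRel (fun u v =>
    G.Adj u v ∨ ∃ t', T.Adj t t' ∧ (u : V) ∈ R.bag t' ∧ (v : V) ∈ R.bag t')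

end TreeRep

/-- `G` has pathwidth less than `k`: it has a representation over a path all of whose bags
have at most `k` vertices. -/
def PathwidthLT {V : Type*} (G : SimpleGraph V) (k : ℕ) : Prop :=
  ∃ (m : ℕ) (R : TreeRep G (pathGraph (m + 1))), R.WidthLT k

/-- `G` has treewidth less than `k`: it has a representation over a tree all of whose bags
have at most `k` vertices. -/
def TreewidthLT {V : Type*} (G : SimpleGraph V) (k : ℕ) : Prop :=
  ∃ (N : Type) (_ : Fintype N) (T : SimpleGraph N), T.IsTree ∧
    ∃ R : TreeRep G T, R.WidthLT k

/-- `G` has treewidth at most `k`. -/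
def TreewidthLE {V : Type*} (G : SimpleGraph V) (k : ℕ) : Prop :=
  ∃ (N : Type) (_ : Fintype N) (T : SimpleGraph N), T.IsTree ∧
    ∃ R : TreeRep G T, R.WidthLE k

/-- A leaf of a graph: a vertex with at most one neighbor. -/
def IsLeafNode {N : Type*} (T : SimpleGraph N) (l : N) : Prop :=
  (T.neighborSet l).Subsingleton

/-- `H` is obtained from `G` by a sequence of edge contractions: there is a surjection
from `V(G)` onto `V(H)` with connected fibers inducing the adjacency of `H`. -/
def IsContraction {W V : Type*} (H : SimpleGraph W) (G : SimpleGraph V) : Prop :=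
  ∃ f : V → W, Function.Surjective f ∧
    (∀ w : W, (G.induce (f ⁻¹' {w})).Connected) ∧
    (∀ x y : W, H.Adj x y ↔ x ≠ y ∧ ∃ u v : V, f u = x ∧ f v = y ∧ G.Adj u v)

/-- `G` is an interval graph: the intersection graph of a family of real intervals. -/
def IsIntervalGraph {V : Type*} (G : SimpleGraph V) : Prop :=
  ∃ l r : V → ℝ, (∀ v, l v ≤ r v) ∧
    ∀ u v : V, G.Adj u v ↔ u ≠ v ∧ max (l u) (l v) ≤ min (r u) (r v)

/-- The internal vertices of a walk: vertices of the walk distinct from its two endpoints. -/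
def WalkInternal {V : Type*} {G : SimpleGraph V} {x y : V} (p : G.Walk x y) : Set V :=
  {w | w ∈ p.support ∧ w ≠ x ∧ w ≠ y}

/-- `H` is a topological minor of `G`: there are branch vertices `φ u` for `u ∈ V(H)` and
internally disjoint paths of `G` joining them, one for each edge of `H`. -/
def IsTopMinor {W V : Type*} (H : SimpleGraph W) (G : SimpleGraph V) : Prop :=
  ∃ (φ : W ↪ V) (P : ∀ ⦃u v : W⦄, H.Adj u v → G.Walk (φ u) (φ v)),
    (∀ ⦃u v⦄ (h : H.Adj u v), (P h).IsPath) ∧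
    (∀ ⦃u v⦄ (h : H.Adj u v), P h.symm = (P h).reverse) ∧
    (∀ ⦃u v⦄ (h : H.Adj u v), ∀ w ∈ WalkInternal (P h), w ∉ Set.range φ) ∧
    (∀ ⦃u v u' v'⦄ (h : H.Adj u v) (h' : H.Adj u' v'), s(u, v) ≠ s(u', v') →
      ∀ w ∈ WalkInternal (P h), w ∉ WalkInternal (P h'))

/-- `H` is (an isomorphic copy of) a subgraph of `G`. -/
def ContainsSubgraphCopy {A B : Type*} (H : SimpleGraph A) (G : SimpleGraph B) : Prop :=
  ∃ f : A ↪ B, ∀ u v : A, H.Adj u v → G.Adj (f u) (f v)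

/-- `G` is `k`-degenerate: every (induced) subgraph has a vertex of degree at most `k`. -/
def Degenerate {V : Type*} (G : SimpleGraph V) (k : ℕ) : Prop :=
  ∀ s : Set V, s.Nonempty → ∃ v ∈ s, {w | w ∈ s ∧ G.Adj v w}.ncard ≤ k

/-- The cycle on `ZMod m` (for `m ≥ 3` this is the cycle graph on `m` vertices). -/
def ringGraph (m : ℕ) : SimpleGraph (ZMod m) :=
  SimpleGraph.fromRel (fun i j => j = i + 1)

/-- Cliquewidth expressions with labels in `Fin k`. -/
inductive CWExpr (k : ℕ) where
  | vertex (l : Fin k) : CWExpr k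
  | union (e₁ e₂ : CWExpr k) : CWExpr k
  | addEdges (i j : Fin k) (hij : i ≠ j) (e : CWExpr k) : CWExpr k
  | relabel (f : Fin k → Fin k) (e : CWExpr k) : CWExpr k

namespace CWExpr

variable {k : ℕ}

/-- The vertex set of the graph described by a cliquewidth expression. -/
def verts : CWExpr k → Type
  | vertex _ => Unit
  | union e₁ e₂ => e₁.verts ⊕ e₂.verts
  | addEdges _ _ _ e => e.verts
  | relabel _ e => e.verts

/-- The labelling of the vertices described by a cliquewidth expression. -/
def label : (e : CWExpr k) → e.verts → Fin k
  | vertex l, _ => l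
  | union e₁ _, Sum.inl x => e₁.label x
  | union _ e₂, Sum.inr x => e₂.label x
  | addEdges _ _ _ e, x => e.label x
  | relabel f e, x => f (e.label x)

/-- The adjacency relation described by a cliquewidth expression. -/
def adj : (e : CWExpr k) → e.verts → e.verts → Prop
  | vertex _, _, _ => False
  | union e₁ _, Sum.inl x, Sum.inl y => e₁.adj x y
  | union _ e₂, Sum.inr x, Sum.inr y => e₂.adj x y
  | union _ _, _, _ => False
  | addEdges i j _ e, x, y =>
      e.adj x y ∨ (e.label x = i ∧ e.label y = j) ∨ (e.label x = j ∧ e.label y = i)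
  | relabel _ e, x, y => e.adj x y

/-- The graph described by a cliquewidth expression. -/
def graph (e : CWExpr k) : SimpleGraph e.verts := SimpleGraph.fromRel e.adj

end CWExpr

/-- `G` has cliquewidth at most `k`: it is isomorphic to the graph of a cliquewidth
expression with at most `k` labels. -/
def CliquewidthLE {V : Type*} (G : SimpleGraph V) (k : ℕ) : Prop :=
  ∃ e : CWExpr k, Nonempty (G ≃g e.graph)

/-- `G` has `(k, Δ)`-almost bounded degree: removing at most `k` vertices yields a graph of
maximum degree at most `Δ`. -/
def AlmostBoundedDegree {V : Type*} (G : SimpleGraph V) (k Δ : ℕ) : Prop :=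
  ∃ X : Set V, X.ncard ≤ k ∧ ∀ v ∉ X, {w | w ∉ X ∧ G.Adj v w}.ncard ≤ Δ

/-- An embedding scheme for `H`: a rotation system (a permutation of the darts that is,
around each vertex, a single cycle on the darts leaving that vertex) together with a
signature on the edges. -/
structure EmbScheme {W : Type*} (H : SimpleGraph W) where
  rot : Equiv.Perm H.Dart
  rot_fst : ∀ d : H.Dart, (rot d).fst = d.fst
  rot_cyclic : ∀ d d' : H.Dart, d.fst = d'.fst → ∃ n : ℕ, (rot ^ n) d = d'
  sign : Sym2 W → Bool

namespace EmbScheme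

variable {W : Type*} {H : SimpleGraph W}

/-- The face-tracing step of an embedding scheme, acting on darts with a direction. -/
def faceStep (S : EmbScheme H) : H.Dart × Bool → H.Dart × Bool :=
  fun p =>
    let s' := xor p.2 (S.sign p.1.edge)
    ((if s' then S.rot.symm p.1.symm else S.rot p.1.symm), s')

/-- The number of orbits of a function. -/
noncomputable def orbitCount {α : Type*} (f : α → α) : ℕ :=
  Nat.card (Quotient (Relation.EqvGen.setoid (fun x y => f x = y)))

/-- The scheme describes an embedding of `H` in a surface of Euler genus at most `g`.
Isolated vertices each bound one face; every other face is traced twice by `faceStep`,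
so the number of faces is `orbitCount (faceStep) / 2` plus the number of isolated
vertices, and the Euler genus of the embedding is `2c - |V| + |E| - F`. -/
def GenusLE (S : EmbScheme H) (g : ℕ) : Prop :=
  2 * Nat.card H.ConnectedComponent + Nat.card H.edgeSet ≤
    g + Nat.card W +
      (orbitCount S.faceStep / 2 + Nat.card {v : W | ∀ w, ¬ H.Adj v w})

/-- The cycle `e 0, e 1, …, e (m-1)` is a facial cycle of the embedding scheme `S`:
its consecutive darts are consecutive in a face traversal. -/
def IsFacialCycle (S : EmbScheme H) {m : ℕ} (e : ZMod m → W)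
    (hadj : ∀ x : ZMod m, H.Adj (e x) (e (x + 1))) : Prop :=
  ∃ b : ZMod m → Bool, ∀ x : ZMod m,
    S.faceStep (⟨(e x, e (x + 1)), hadj x⟩, b x) =
      (⟨(e (x + 1), e (x + 1 + 1)), hadj (x + 1)⟩, b (x + 1))

end EmbScheme

/-- `Hs` has a `C`-vortex of width less than `k`, where `C` is the cycle of `G₀` given by
`e`: the vertices common to `Hs` and `G₀` are exactly those of `C`, and `Hs` has a cycle
representation over `C` in which the model of each vertex of `C` contains that vertex and
every bag has at most `k` vertices. -/
def IsVortex {V : Type*} {G : SimpleGraph V} (Hs G₀ : G.Subgraph) {m : ℕ}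
    (e : ZMod m → G₀.verts) (k : ℕ) : Prop :=
  Hs.verts ∩ G₀.verts = Subtype.val '' Set.range e ∧
  ∃ model : Hs.verts → Set (ZMod m),
    (∀ v, ((ringGraph m).induce (model v)).Connected) ∧
    (∀ (x : ZMod m) (v : Hs.verts), (e x : V) = (v : V) → x ∈ model v) ∧
    (∀ ⦃u v⦄, Hs.coe.Adj u v → (model u ∩ model v).Nonempty) ∧
    (∀ t : ZMod m, {v : Hs.verts | t ∈ model v}.ncard ≤ k)

/-- `G` is `(g, p, a, k)`-almost-embeddable. -/
def AlmostEmbeddable {V : Type*} (G : SimpleGraph V) (g p a k : ℕ) : Prop :=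
  ∃ A : Set V, A.ncard ≤ a ∧
  ∃ s : ℕ, s ≤ p ∧
  ∃ (G₀ : G.Subgraph) (Gv : Fin s → G.Subgraph),
    (G₀ ⊔ ⨆ i, Gv i) = (⊤ : G.Subgraph).deleteVerts A ∧
    (∀ i j, i ≠ j → Disjoint (Gv i).verts (Gv j).verts) ∧
    ∃ S : EmbScheme G₀.coe, S.GenusLE g ∧
    ∃ (m : Fin s → ℕ) (e : ∀ i, ZMod (m i) → G₀.verts)
      (hadj : ∀ i x, G₀.coe.Adj (e i x) (e i (x + 1))),
      (∀ i, 3 ≤ m i) ∧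
      (∀ i, Function.Injective (e i)) ∧
      (∀ i, S.IsFacialCycle (e i) (hadj i)) ∧
      (∀ i j, i ≠ j → Disjoint (Set.range (e i)) (Set.range (e j))) ∧
      (∀ i, IsVortex (Gv i) G₀ (e i) k)


lemma myNcardList {U : Type*} (l : List U) (hl : l.Nodup) :
    ({w | w ∈ l} : Set U).ncard = l.length := by
  classical
  have h : ({w | w ∈ l} : Set U) = ↑l.toFinset := by ext w; simp
  rw [h, Set.ncard_coe_finset, List.toFinset_card_of_nodup hl]

lemma myWalkOfChain {U : Type*} (Γ : SimpleGraph U) (a : U) (l : List U)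
    (hc : (a :: l).Chain' Γ.Adj) : ∃ (b : U) (q : Γ.Walk a b), q.support = a :: l := by
  induction l generalizing a with
  | nil => exact ⟨a, Walk.nil, rfl⟩
  | cons b l ih =>
    obtain ⟨hab, hc'⟩ := List.isChain_cons_cons.mp hc
    obtain ⟨c, q, hq⟩ := ih b hc'
    exact ⟨c, Walk.cons hab q, by simp [hq]⟩

lemma mySegLemma {U : Type*} (Γ : SimpleGraph U) (px : U → Bool) :
    ∀ l : List U, l.Chain' Γ.Adj →
    ∃ t : List U, t.Chain' Γ.Adj ∧ t.Sublist l ∧ (∀ w ∈ t, px w = true) ∧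
      (l.takeWhile px).length ≤ t.length ∧
      l.length ≤ l.countP (fun w => !px w) * (t.length + 1) + (l.takeWhile px).length := by
  intro l
  induction l with
  | nil => exact fun _ => ⟨[], List.isChain_nil, List.Sublist.refl _, by simp, by simp, by simp⟩
  | cons a l ih =>
    intro hc
    obtain ⟨t, h1, h2, h3, h4, h5⟩ := ih hc.tail
    by_cases hpa : px a = true
    · have hcount : (a :: l).countP (fun w => !px w) = l.countP (fun w => !px w) := by
        rw [List.countP_cons_of_neg]
        simp [hpa]
      have htw : (a :: l).takeWhile px = a :: l.takeWhile px :=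
        List.takeWhile_cons_of_pos hpa
      by_cases hlt : (l.takeWhile px).length < t.length
      · refine ⟨t, h1, h2.cons a, h3, ?_, ?_⟩
        · rw [htw]; simpa using hlt
        · rw [hcount, htw]
          simp only [List.length_cons]
          omega
      · refine ⟨(a :: l).takeWhile px, hc.prefix (List.takeWhile_prefix px),
          (List.takeWhile_prefix px).sublist, fun w hw => List.mem_takeWhile_imp hw,
          le_refl _, ?_⟩
        rw [hcount, htw]
        have h6 : t.length ≤ (l.takeWhile px).length := by omega
        have h7 : l.countP (fun w => !px w) * (t.length + 1) ≤
            l.countP (fun w => !px w) * ((l.takeWhile px).length + 1 + 1) :=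
          Nat.mul_le_mul_left _ (by omega)
        simp only [List.length_cons]
        omega
    · have hcount : (a :: l).countP (fun w => !px w) = l.countP (fun w => !px w) + 1 := by
        rw [List.countP_cons_of_pos]
        simp [hpa]
      have htw : (a :: l).takeWhile px = [] := by
        rw [List.takeWhile_cons_of_neg (by simp [hpa])]
      refine ⟨t, h1, h2.cons a, h3, ?_, ?_⟩
      · rw [htw]; simp
      · rw [hcount, htw]
        have hx : (l.countP (fun w => !px w) + 1) * (t.length + 1) =
            l.countP (fun w => !px w) * (t.length + 1) + (t.length + 1) := by ring
        simp only [List.length_cons, List.length_nil]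
        omega

lemma myPathGraphZero {V : Type*} (G : SimpleGraph V) : Nonempty (pathGraph 0 ↪g G) :=
  ⟨⟨⟨Fin.elim0, fun a => a.elim0⟩, fun {a} => a.elim0⟩⟩

lemma myPathGraphOne {V : Type*} (G : SimpleGraph V) (v : V) : Nonempty (pathGraph 1 ↪g G) :=
  ⟨⟨⟨fun _ => v, fun a b _ => Subsingleton.elim a b⟩, fun {a b} => by
    have hab : a = b := Subsingleton.elim a b
    subst hab
    exact iff_of_false (G.loopless.irrefl v) ((pathGraph 1).loopless.irrefl a)⟩⟩

def myEmbInduce {V : Type*} (G : SimpleGraph V) {s t : Set V} (h : s ⊆ t) :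
    G.induce s ↪g G.induce t where
  toFun := fun x => ⟨x.1, h x.2⟩
  inj' := by intro x y hxy; simpa [Subtype.ext_iff] using hxy
  map_rel_iff' := by intro a b; simp [comap_adj]; exact Iff.rfl

set_option maxHeartbeats 1000000 in
theorem stmt7 (𝒢 : ∀ {W : Type}, SimpleGraph W → Prop)
    (hhered : ∀ {W W' : Type} (G : SimpleGraph W) (H : SimpleGraph W'),
      𝒢 G → Nonempty (H ↪g G) → 𝒢 H)
    (c d : ℝ) (hc : 0 < c) (hd : 0 < d)
    (hbound : ∀ {W : Type} [Fintype W] (G : SimpleGraph W) (n : ℕ), 𝒢 G → HasHamPath G →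
      Fintype.card W = n → HasInducedPathGE G (c * Real.logb 2 n ^ d))
    (ε : ℝ) (hε0 : 0 < ε) (hε1 : ε < 1) :
    ∃ c' : ℝ, 0 < c' ∧
      ∀ {W : Type} [Fintype W] (G : SimpleGraph W) (n : ℕ),
        (∃ X : Set W, (X.ncard : ℝ) ≤ (Fintype.card W : ℝ) ^ ε ∧ 𝒢 (G.induce Xᶜ)) →
        HasHamPath G → Fintype.card W = n →
        HasInducedPathGE G (c' * Real.logb 2 n ^ d) := by
  classical
  have h1ε : 0 < 1 - ε := by linarith
  set L : ℝ := 4 / (1 - ε) with hL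
  have hLpos : 0 < L := by positivity
  have hL4 : 4 ≤ L := by
    rw [hL, le_div_iff₀ h1ε]; nlinarith
  have hc1 : 0 < c * ((1 - ε) / 2) ^ d := by positivity
  have hc2 : 0 < (L ^ d)⁻¹ := by positivity
  refine ⟨min (c * ((1 - ε) / 2) ^ d) (L ^ d)⁻¹, lt_min hc1 hc2, ?_⟩
  intro W _ G n hX hham hn
  obtain ⟨X, hXcard, hXG⟩ := hX
  obtain ⟨u, v, p, hp, hcov⟩ := hham
  rcases Nat.eq_zero_or_pos n with hn0 | hnpos
  · subst hn0
    refine ⟨0, ?_, myPathGraphZero G⟩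
    simp [Real.zero_rpow hd.ne']
  have hnR1 : (1 : ℝ) ≤ (n : ℝ) := by exact_mod_cast hnpos
  have hnRpos : (0 : ℝ) < (n : ℝ) := by linarith
  have hlogn0 : 0 ≤ logb 2 (n : ℝ) := logb_nonneg one_lt_two hnR1
  by_cases hbig : L ≤ logb 2 (n : ℝ)
  swap
  · -- small case
    have hWne : Nonempty W := by
      rw [← Fintype.card_pos_iff, hn]; exact hnpos
    obtain ⟨w0⟩ := hWne
    refine ⟨1, ?_, myPathGraphOne G w0⟩
    have h1 : logb 2 (n : ℝ) ^ d ≤ L ^ d :=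
      Real.rpow_le_rpow hlogn0 (le_of_not_ge hbig) hd.le
    have h2 : min (c * ((1 - ε) / 2) ^ d) (L ^ d)⁻¹ * logb 2 (n : ℝ) ^ d ≤
        (L ^ d)⁻¹ * L ^ d :=
      mul_le_mul (min_le_right _ _) h1 (Real.rpow_nonneg hlogn0 d) hc2.le
    rw [inv_mul_cancel₀ (ne_of_gt (Real.rpow_pos_of_pos hLpos d))] at h2
    push_cast
    linarith
  -- big case
  set px : W → Bool := fun w => decide (w ∉ X) with hpx
  obtain ⟨t, htc, htsub, htavoid, htw, hlen⟩ :=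
    mySegLemma G px p.support p.isChain_adj_support
  have hsupnodup : p.support.Nodup := (Walk.isPath_def p).mp hp
  have hsuplen : p.support.length = n := by
    rw [← hn]
    have huniv : ({w | w ∈ p.support} : Set W) = Set.univ := Set.eq_univ_of_forall hcov
    have h2 := myNcardList p.support hsupnodup
    rw [huniv, Set.ncard_univ, Nat.card_eq_fintype_card] at h2
    omega
  set k' := p.support.countP (fun w => !px w) with hk'
  have hk'le : k' ≤ X.ncard := by
    rw [hk', List.countP_eq_length_filter]
    set f := p.support.filter (fun w => !px w) with hf
    have hfn : f.Nodup := hsupnodup.filter _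
    have hfsub : {w | w ∈ f} ⊆ X := by
      intro w hw
      have h3 := List.of_mem_filter hw
      simpa [hpx] using h3
    calc f.length = ({w | w ∈ f} : Set W).ncard := (myNcardList f hfn).symm
      _ ≤ X.ncard := Set.ncard_le_ncard hfsub (Set.toFinite X)
  set m := t.length with hm
  have hnat : n ≤ k' * (m + 1) + m := by
    rw [← hsuplen]; omega
  -- real arithmetic
  set ρ := logb 2 (n : ℝ) with hρ
  have hρpos : 0 < ρ := lt_of_lt_of_le hLpos hbig
  have hn2ρ : (n : ℝ) = 2 ^ ρ := (Real.rpow_logb two_pos (by norm_num) hnRpos).symm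
  have hprod : 4 ≤ ρ * (1 - ε) := by
    have h4 : L * (1 - ε) ≤ ρ * (1 - ε) := mul_le_mul_of_nonneg_right hbig h1ε.le
    rw [hL, div_mul_cancel₀ _ h1ε.ne'] at h4
    exact h4
  have hne : (n : ℝ) ^ (1 - ε) = 2 ^ (ρ * (1 - ε)) := by
    rw [hn2ρ, ← Real.rpow_mul (by norm_num : (0:ℝ) ≤ 2)]
  have h16 : (16 : ℝ) ≤ (n : ℝ) ^ (1 - ε) := by
    rw [hne]
    calc (16 : ℝ) = 2 ^ (4 : ℝ) := by
          rw [show (4 : ℝ) = ((4 : ℕ) : ℝ) by norm_num, Real.rpow_natCast]; norm_num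
      _ ≤ 2 ^ (ρ * (1 - ε)) := (Real.rpow_le_rpow_left_iff one_lt_two).mpr hprod
  have hsplit : (n : ℝ) = (n : ℝ) ^ ε * (n : ℝ) ^ (1 - ε) := by
    rw [← Real.rpow_add hnRpos]
    norm_num
  have h1nε : (1 : ℝ) ≤ (n : ℝ) ^ ε := Real.one_le_rpow hnR1 hε0.le
  have hA : (0 : ℝ) < (n : ℝ) ^ ε := Real.rpow_pos_of_pos hnRpos ε
  have hεle : (n : ℝ) ^ ε * 2 ≤ (n : ℝ) := by
    have h7 : (n : ℝ) ^ ε * 2 ≤ (n : ℝ) ^ ε * ((n : ℝ) ^ (1 - ε)) :=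
      mul_le_mul_of_nonneg_left (by linarith) hA.le
    linarith [hsplit]
  have hkR : (k' : ℝ) ≤ (n : ℝ) ^ ε := by
    have h5 : (k' : ℝ) ≤ (X.ncard : ℝ) := by exact_mod_cast hk'le
    rw [hn] at hXcard
    linarith
  have hmain : (n : ℝ) ≤ (k' : ℝ) * ((m : ℝ) + 1) + (m : ℝ) := by exact_mod_cast hnat
  have hm0 : (0 : ℝ) ≤ (m : ℝ) := Nat.cast_nonneg m
  have step1 : (n : ℝ) ≤ 2 * ((n : ℝ) ^ ε * (m : ℝ)) + (n : ℝ) ^ ε := by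
    have h8 : (k' : ℝ) * ((m : ℝ) + 1) ≤ (n : ℝ) ^ ε * ((m : ℝ) + 1) :=
      mul_le_mul_of_nonneg_right hkR (by linarith)
    have h9 : (m : ℝ) ≤ (n : ℝ) ^ ε * (m : ℝ) := le_mul_of_one_le_left hm0 h1nε
    nlinarith
  have step2 : (n : ℝ) ≤ 4 * ((n : ℝ) ^ ε * (m : ℝ)) := by linarith
  have hmR : (n : ℝ) ^ (1 - ε) / 4 ≤ (m : ℝ) := by
    have step3 : (n : ℝ) ^ ε * ((n : ℝ) ^ (1 - ε)) ≤ (n : ℝ) ^ ε * (4 * (m : ℝ)) := by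
      rw [← hsplit]; linarith
    have step4 := le_of_mul_le_mul_left step3 hA
    linarith
  have hm1R : (1 : ℝ) ≤ (m : ℝ) := by linarith
  have hm1 : 1 ≤ m := by exact_mod_cast hm1R
  have hmpos : (0 : ℝ) < (m : ℝ) := by linarith
  have hlogm : ρ * (1 - ε) - 2 ≤ logb 2 (m : ℝ) := by
    have hpow : (2 : ℝ) ^ (ρ * (1 - ε) - 2) ≤ (m : ℝ) := by
      rw [Real.rpow_sub two_pos, ← hne]
      have h22 : (2 : ℝ) ^ (2 : ℝ) = 4 := by
        rw [show (2 : ℝ) = ((2 : ℕ) : ℝ) from by norm_num, Real.rpow_natCast]; norm_num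
      rw [h22]
      linarith
    calc ρ * (1 - ε) - 2 = logb 2 ((2 : ℝ) ^ (ρ * (1 - ε) - 2)) :=
          (Real.logb_rpow two_pos (by norm_num)).symm
      _ ≤ logb 2 (m : ℝ) :=
          Real.logb_le_logb_of_le one_lt_two (Real.rpow_pos_of_pos two_pos _) hpow
  have hhalf : ρ * ((1 - ε) / 2) ≤ logb 2 (m : ℝ) := by nlinarith [hlogm, hprod]
  have hhalfpos : 0 ≤ ρ * ((1 - ε) / 2) := by positivity
  -- construct H
  have htnodup : t.Nodup := hsupnodup.sublist htsub
  have htX : ∀ w ∈ t, w ∉ X := fun w hw => by simpa [hpx] using htavoid w hw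
  set S : Set W := ↑t.toFinset with hS
  have hmemS : ∀ w, w ∈ S ↔ w ∈ t := by intro w; simp [hS]
  set H : SimpleGraph ↥S := G.induce S with hH
  have hSsub : S ⊆ Xᶜ := fun w hw => htX w ((hmemS w).mp hw)
  have hGH : 𝒢 H := hhered (G.induce Xᶜ) H hXG ⟨myEmbInduce G hSsub⟩
  have hcard : Fintype.card ↥S = m := by
    rw [← Nat.card_eq_fintype_card, Nat.card_coe_set_eq, hS, Set.ncard_coe_finset,
      List.toFinset_card_of_nodup htnodup]
  set t' : List ↥S := t.attach.map (fun w => (⟨w.1, (hmemS _).mpr w.2⟩ : ↥S)) with ht'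
  have ht'map : t'.map Subtype.val = t := by
    rw [ht', List.map_map]
    have h10 := List.attach_map_val (l := t) (f := fun x => x)
    simpa [Function.comp] using h10
  have ht'chain : t'.Chain' H.Adj := by
    have h6 := htc
    unfold List.Chain' at h6 ⊢
    rw [← ht'map, List.isChain_map] at h6
    exact h6.imp (fun a b hab => hab)
  have ht'nodup : t'.Nodup := List.Nodup.of_map Subtype.val (ht'map ▸ htnodup)
  have ht'len : t'.length = m := by
    have := congrArg List.length ht'map
    simpa using this
  have ht'ne : t' ≠ [] := by
    intro h
    rw [h] at ht'len
    simp at ht'len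
    omega
  obtain ⟨a, ts, hts⟩ := List.exists_cons_of_ne_nil ht'ne
  obtain ⟨b, q, hq⟩ := myWalkOfChain H a ts (hts ▸ ht'chain)
  have hqpath : q.IsPath := by
    rw [Walk.isPath_def, hq, ← hts]; exact ht'nodup
  have hqham : HasHamPath H := by
    refine ⟨a, b, q, hqpath, fun x => ?_⟩
    rw [hq, ← hts]
    have hx : (x : W) ∈ t := (hmemS _).mp x.2
    rw [← ht'map] at hx
    obtain ⟨y, hy, hyx⟩ := List.mem_map.mp hx
    rwa [Subtype.ext hyx] at hy
  obtain ⟨r, hr1, hr2⟩ := hbound H m hGH hqham hcard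
  obtain ⟨emb⟩ := hr2
  refine ⟨r, ?_, ⟨(Embedding.induce S).comp emb⟩⟩
  -- final inequality
  have key : min (c * ((1 - ε) / 2) ^ d) (L ^ d)⁻¹ * ρ ^ d ≤ c * logb 2 (m : ℝ) ^ d := by
    have h1 : (ρ * ((1 - ε) / 2)) ^ d ≤ logb 2 (m : ℝ) ^ d :=
      Real.rpow_le_rpow hhalfpos hhalf hd.le
    rw [Real.mul_rpow hρpos.le (by linarith : (0 : ℝ) ≤ (1 - ε) / 2)] at h1
    calc min (c * ((1 - ε) / 2) ^ d) (L ^ d)⁻¹ * ρ ^ d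
        ≤ c * ((1 - ε) / 2) ^ d * ρ ^ d :=
          mul_le_mul_of_nonneg_right (min_le_left _ _) (Real.rpow_nonneg hρpos.le d)
      _ = c * (ρ ^ d * ((1 - ε) / 2) ^ d) := by ring
      _ ≤ c * logb 2 (m : ℝ) ^ d := mul_le_mul_of_nonneg_left h1 hc.le
  linarith
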